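/- The hexagonal lattice circle packing in the plane has density π/√12: for the lattice L = {2a·(1,0) + 2b·(1/2, √3/2) : a, b ∈ ℤ}, the ratio of the area covered by unit disks centered at points of L ∩ B(0,r) to the area of B(0,r) tends to π/√12 as r → ∞. -/

import Mathlib

open Real Metric MeasureTheory Filter

/-- The hexagonal lattice `{2a·(1,0) + 2b·(1/2, √3/2) : a, b ∈ ℤ}` in the plane. -/
def HexLattice : Set (EuclideanSpace ℝ (Fin 2)) :=
  {v | ∃ a b : ℤ,
    v = fun i => 2 * (a : ℝ) * ![(1 : ℝ), 0] i + 2 * (b : ℝ) * ![(1 / 2 : ℝ), Real.sqrt 3 / 2] i}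

namespace HexProof

open Submodule ZSpan
open scoped ENNReal Pointwise

noncomputable section

abbrev E2 := EuclideanSpace ℝ (Fin 2)

def hexv : Fin 2 → E2 :=
  ![(WithLp.equiv 2 _).symm ![(2:ℝ), 0], (WithLp.equiv 2 _).symm ![(1:ℝ), Real.sqrt 3]]

lemma hexv_li : LinearIndependent ℝ hexv := by
  rw [show hexv = ![hexv 0, hexv 1] by ext i; fin_cases i <;> rfl]
  rw [LinearIndependent.pair_iff]
  intro s t h
  have h0 := congrArg (fun v : E2 => v 0) h
  have h1 := congrArg (fun v : E2 => v 1) h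
  simp [hexv] at h0 h1
  constructor <;> linarith

def hexB : Module.Basis (Fin 2) ℝ E2 :=
  basisOfLinearIndependentOfCardEqFinrank hexv_li (by simp)

lemma hexB_eq : ⇑hexB = hexv := coe_basisOfLinearIndependentOfCardEqFinrank _ _

abbrev L : Submodule ℤ E2 := span ℤ (Set.range hexB)

lemma mem_L_iff {v : E2} : v ∈ L ↔ ∃ a c : ℤ, (a:ℝ) • hexv 0 + (c:ℝ) • hexv 1 = v := by
  have hr : Set.range hexB = {hexv 0, hexv 1} := by
    rw [hexB_eq]; ext x; simp [Set.range, Fin.exists_fin_two]; tauto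
  show v ∈ span ℤ (Set.range ⇑hexB) ↔ _
  rw [hr, mem_span_pair]
  constructor
  · rintro ⟨a, c, h⟩
    exact ⟨a, c, by rw [← h, Int.cast_smul_eq_zsmul, Int.cast_smul_eq_zsmul]⟩
  · rintro ⟨a, c, h⟩
    exact ⟨a, c, by rw [← h, Int.cast_smul_eq_zsmul, Int.cast_smul_eq_zsmul]⟩

lemma hex_eq_span : HexLattice = (L : Set E2) := by
  ext v
  rw [SetLike.mem_coe, mem_L_iff]
  constructor
  · rintro ⟨a, b, h⟩
    refine ⟨a, b, ?_⟩
    ext i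
    rw [congrFun h i]
    fin_cases i <;> simp [hexv] <;> ring
  · rintro ⟨a, b, h⟩
    refine ⟨a, b, ?_⟩
    rw [← h]
    ext i
    fin_cases i <;> simp [hexv] <;> ring

lemma one_le_sq {a : ℤ} (h : a ≠ 0) : 1 ≤ a^2 := by
  have h2 : 0 < a^2 := by positivity
  linarith [Int.lt_iff_add_one_le.mp h2]

lemma int_min : ∀ a c : ℤ, (a ≠ 0 ∨ c ≠ 0) → 4 ≤ (2*a+c)^2 + 3*c^2 := by
  intro a c h
  rcases eq_or_ne c 0 with rfl | hc
  · have ha : a ≠ 0 := h.resolve_right (by simp)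
    nlinarith [one_le_sq ha]
  · rcases eq_or_ne (2*a+c) 0 with h0 | h0
    · have hce : c = -2*a := by linarith
      have ha : a ≠ 0 := by rintro rfl; simp [hce] at hc
      nlinarith [one_le_sq ha]
    · nlinarith [one_le_sq h0, one_le_sq hc]

lemma norm_comb_sq (a c : ℤ) :
    ‖(a:ℝ) • hexv 0 + (c:ℝ) • hexv 1‖^2 = ((2*a+c)^2 + 3*c^2 : ℤ) := by
  rw [EuclideanSpace.norm_eq]
  rw [Real.sq_sqrt (by positivity)]
  have h0 : ((a:ℝ) • hexv 0 + (c:ℝ) • hexv 1) 0 = 2*a + c := by simp [hexv]; ring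
  have h1 : ((a:ℝ) • hexv 0 + (c:ℝ) • hexv 1) 1 = c * Real.sqrt 3 := by simp [hexv]
  rw [Fin.sum_univ_two, h0, h1]
  push_cast
  rw [Real.norm_eq_abs, Real.norm_eq_abs, sq_abs, sq_abs]
  nlinarith [Real.sq_sqrt (show (0:ℝ) ≤ 3 by norm_num)]

lemma min_dist {v : E2} (hv : v ∈ L) (hv0 : v ≠ 0) : 2 ≤ ‖v‖ := by
  obtain ⟨a, c, rfl⟩ := mem_L_iff.mp hv
  have hac : a ≠ 0 ∨ c ≠ 0 := by
    by_contra h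
    push_neg at h
    apply hv0
    simp [h.1, h.2]
  have h4 : (4:ℝ) ≤ ‖(a:ℝ) • hexv 0 + (c:ℝ) • hexv 1‖^2 := by
    rw [norm_comb_sq]
    exact_mod_cast int_min a c hac
  nlinarith [norm_nonneg ((a:ℝ) • hexv 0 + (c:ℝ) • hexv 1)]

def stdB : Module.Basis (Fin 2) ℝ E2 := (EuclideanSpace.basisFun (Fin 2) ℝ).toBasis

lemma vol_std_fd : volume (fundamentalDomain stdB) = 1 := by
  have h1 : fundamentalDomain stdB =
      (MeasurableEquiv.toLp 2 (Fin 2 → ℝ)).symm ⁻¹'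
        (Set.univ.pi fun _ : Fin 2 => Set.Ico (0:ℝ) 1) := by
    ext x
    simp [fundamentalDomain, stdB, EuclideanSpace.basisFun, Set.mem_pi]
  rw [h1, (EuclideanSpace.volume_preserving_symm_measurableEquiv_toLp (Fin 2)).measure_preimage
    (MeasurableSet.univ_pi fun _ => measurableSet_Ico).nullMeasurableSet]
  simp [volume_pi, Measure.pi_pi]

lemma det_std_hex : stdB.det hexB = 2 * Real.sqrt 3 := by
  rw [Module.Basis.det_apply]
  rw [show stdB.toMatrix hexB = Matrix.of fun i j => hexB j i by
    ext i j; simp [Module.Basis.toMatrix_apply, stdB]]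
  rw [Matrix.det_fin_two]
  simp [hexB_eq, hexv]

abbrev F : Set E2 := fundamentalDomain hexB

lemma vol_hex_fd : volume F = ENNReal.ofReal (2 * Real.sqrt 3) := by
  classical
  rw [ZSpan.measure_fundamentalDomain hexB volume stdB, vol_std_fd, det_std_hex, mul_one,
    abs_of_nonneg (by positivity)]

lemma norm_hexv : ‖hexv 0‖ = 2 ∧ ‖hexv 1‖ = 2 := by
  constructor
  · rw [EuclideanSpace.norm_eq, Fin.sum_univ_two]
    simp [hexv, Real.norm_eq_abs, sq_abs]
  · rw [EuclideanSpace.norm_eq, Fin.sum_univ_two]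
    simp [hexv, Real.norm_eq_abs, sq_abs]
    rw [show (1:ℝ) + 3 = 4 by norm_num]
    rw [show (4:ℝ) = 2^2 by norm_num, Real.sqrt_sq (by norm_num)]

lemma norm_le_of_mem_F {x : E2} (hx : x ∈ F) : ‖x‖ ≤ 4 := by
  have h := ZSpan.norm_fract_le hexB x
  rw [ZSpan.fract_eq_self.mpr hx] at h
  refine h.trans ?_
  rw [Fin.sum_univ_two, hexB_eq, norm_hexv.1, norm_hexv.2]
  norm_num

lemma vol_ball_one (x : E2) : volume (ball x 1) = ENNReal.ofReal π := by
  rw [EuclideanSpace.volume_ball]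
  simp
  rw [show (1:ℝ)+1 = 2 by norm_num, Real.Gamma_two, Real.sq_sqrt Real.pi_nonneg]
  simp

lemma vol_cb (r : ℝ) (hr : 0 ≤ r) :
    volume (closedBall (0:E2) r) = ENNReal.ofReal (π * r^2) := by
  rw [EuclideanSpace.volume_closedBall]
  simp
  rw [show (1:ℝ)+1 = 2 by norm_num, Real.Gamma_two, Real.sq_sqrt Real.pi_nonneg]
  rw [← ENNReal.ofReal_pow hr, ← ENNReal.ofReal_mul (by positivity)]
  simp [mul_comm]

def S (r : ℝ) : Set E2 := HexLattice ∩ closedBall 0 r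

def N (r : ℝ) : ℕ := (S r).ncard

lemma mem_S_L {v : E2} {r : ℝ} (h : v ∈ S r) : v ∈ L := by
  have := h.1
  rwa [hex_eq_span] at this

lemma finite_S (r : ℝ) : (S r).Finite := by
  have hd : DiscreteTopology (L : Set E2) :=
    (inferInstance : DiscreteTopology (span ℤ (Set.range ⇑hexB)))
  have hc : IsClosed (L.toAddSubgroup : Set E2) := AddSubgroup.isClosed_of_discrete
  have hcpt : IsCompact ((L : Set E2) ∩ closedBall 0 r) :=
    (isCompact_closedBall _ _).inter_left hc
  have hsub : S r ⊆ (L : Set E2) ∩ closedBall 0 r := by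
    rintro x ⟨h1, h2⟩
    rw [hex_eq_span] at h1
    exact ⟨h1, h2⟩
  exact ((hcpt.finite (by
    have : DiscreteTopology ((L : Set E2) ∩ closedBall 0 r : Set E2) :=
      DiscreteTopology.of_subset hd Set.inter_subset_left
    exact isDiscrete_iff_discreteTopology.mpr this))).subset hsub

lemma balls_disj {v w : E2} (hv : v ∈ L) (hw : w ∈ L) (hne : v ≠ w) :
    Disjoint (ball v 1) (ball w 1) := by
  apply ball_disjoint_ball
  rw [dist_eq_norm]
  have : v - w ∈ L := sub_mem hv hw
  have h2 : v - w ≠ 0 := sub_ne_zero.mpr hne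
  linarith [min_dist this h2]

lemma vol_balls (r : ℝ) :
    volume (⋃ v ∈ S r, ball v 1) = (N r : ℝ≥0∞) * ENNReal.ofReal π := by
  classical
  have hfin := finite_S r
  rw [show ⋃ v ∈ S r, ball v 1 = ⋃ v ∈ hfin.toFinset, ball v 1 by simp]
  rw [measure_biUnion_finset ?disj (fun _ _ => measurableSet_ball)]
  · simp only [vol_ball_one, Finset.sum_const, nsmul_eq_mul]
    rw [N, Set.ncard_eq_toFinset_card _ hfin]
  case disj =>
    intro v hv w hw hne
    simp only [Set.Finite.coe_toFinset] at hv hw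
    exact balls_disj (mem_S_L hv) (mem_S_L hw) hne

lemma mem_vadd_F {v x : E2} : x ∈ v +ᵥ F ↔ x - v ∈ F := by
  constructor
  · rintro ⟨f, hf, rfl⟩
    simpa using hf
  · intro h
    exact ⟨x - v, h, by simp⟩

lemma vadd_F_measurable (v : E2) : MeasurableSet (v +ᵥ F) := by
  have : (v +ᵥ F) = (fun x => x - v) ⁻¹' F := by
    ext x; rw [mem_vadd_F]; rfl
  rw [this]
  exact (fundamentalDomain_measurableSet hexB).preimage (measurable_id.sub_const v)

lemma vol_vadd_F (v : E2) : volume (v +ᵥ F) = ENNReal.ofReal (2 * Real.sqrt 3) := by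
  rw [← vol_hex_fd]
  exact measure_vadd _ _ _

lemma tiles_disj {v w : E2} (hv : v ∈ L) (hw : w ∈ L) (hne : v ≠ w) :
    Disjoint (v +ᵥ F) (w +ᵥ F) := by
  rw [Set.disjoint_left]
  intro x hxv hxw
  rw [mem_vadd_F] at hxv hxw
  apply hne
  have h1 : fract hexB (x - v) = x - v := fract_eq_self.mpr hxv
  have h2 : fract hexB (x - w) = x - w := fract_eq_self.mpr hxw
  have e1 : fract hexB (x - v) = fract hexB x := by
    rw [sub_eq_add_neg, add_comm]
    exact fract_zSpan_add hexB x (neg_mem hv)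
  have e2 : fract hexB (x - w) = fract hexB x := by
    rw [sub_eq_add_neg, add_comm]
    exact fract_zSpan_add hexB x (neg_mem hw)
  have : x - v = x - w := by rw [← h1, ← h2, e1, e2]
  exact (sub_right_inj.mp this)

lemma vol_tiles (r : ℝ) :
    volume (⋃ v ∈ S r, v +ᵥ F) = (N r : ℝ≥0∞) * ENNReal.ofReal (2 * Real.sqrt 3) := by
  classical
  have hfin := finite_S r
  rw [show ⋃ v ∈ S r, v +ᵥ F = ⋃ v ∈ hfin.toFinset, v +ᵥ F by simp]
  rw [measure_biUnion_finset ?disj (fun v _ => vadd_F_measurable v)]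
  · simp only [vol_vadd_F, Finset.sum_const, nsmul_eq_mul]
    rw [N, Set.ncard_eq_toFinset_card _ hfin]
  case disj =>
    intro v hv w hw hne
    simp only [Set.Finite.coe_toFinset] at hv hw
    exact tiles_disj (mem_S_L hv) (mem_S_L hw) hne

lemma tile_subset {v : E2} {r : ℝ} (hv : v ∈ S r) : v +ᵥ F ⊆ closedBall 0 (r + 4) := by
  intro x hx
  rw [mem_vadd_F] at hx
  rw [mem_closedBall, dist_zero_right]
  have h1 : ‖x - v‖ ≤ 4 := norm_le_of_mem_F hx
  have h2 : ‖v‖ ≤ r := by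
    have := hv.2
    rwa [mem_closedBall, dist_zero_right] at this
  calc ‖x‖ = ‖v + (x - v)‖ := by rw [add_sub_cancel]
    _ ≤ ‖v‖ + ‖x - v‖ := norm_add_le _ _
    _ ≤ r + 4 := by linarith

lemma cover {r : ℝ} (hr : 0 ≤ r) :
    closedBall (0:E2) r ⊆ ⋃ v ∈ S (r + 4), v +ᵥ F := by
  intro x hx
  rw [mem_closedBall, dist_zero_right] at hx
  set v : E2 := (ZSpan.floor hexB x : E2) with hv
  have hfr : fract hexB x = x - v := rfl
  have hvL : v ∈ L := SetLike.coe_mem _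
  have hxF : x - v ∈ F := by rw [← hfr]; exact fract_mem_fundamentalDomain hexB x
  have hnf : ‖x - v‖ ≤ 4 := norm_le_of_mem_F hxF
  have hvS : v ∈ S (r + 4) := by
    constructor
    · rw [hex_eq_span]; exact hvL
    · rw [mem_closedBall, dist_zero_right]
      calc ‖v‖ = ‖x - (x - v)‖ := by rw [sub_sub_cancel]
        _ ≤ ‖x‖ + ‖x - v‖ := norm_sub_le _ _
        _ ≤ r + 4 := by linarith
  exact Set.mem_biUnion hvS (mem_vadd_F.mpr hxF)

lemma upper_bound {r : ℝ} (hr : 0 ≤ r) : (N r : ℝ) * (2 * Real.sqrt 3) ≤ π * (r + 4)^2 := by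
  have hm : volume (⋃ v ∈ S r, v +ᵥ F) ≤ volume (closedBall (0:E2) (r + 4)) := by
    apply measure_mono
    exact Set.iUnion₂_subset fun v hv => tile_subset hv
  rw [vol_tiles, vol_cb _ (by linarith)] at hm
  rw [← ENNReal.ofReal_natCast, ← ENNReal.ofReal_mul (by positivity)] at hm
  exact (ENNReal.ofReal_le_ofReal_iff (by positivity)).mp hm

lemma lower_bound {r : ℝ} (hr : 0 ≤ r) : π * r^2 ≤ (N (r + 4) : ℝ) * (2 * Real.sqrt 3) := by
  have hm : volume (closedBall (0:E2) r) ≤ volume (⋃ v ∈ S (r + 4), v +ᵥ F) := by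
    apply measure_mono (cover hr)
  rw [vol_tiles, vol_cb _ hr] at hm
  rw [← ENNReal.ofReal_natCast, ← ENNReal.ofReal_mul (by positivity)] at hm
  exact (ENNReal.ofReal_le_ofReal_iff (by positivity)).mp hm

lemma sqrt12 : Real.sqrt 12 = 2 * Real.sqrt 3 := by
  rw [show (12:ℝ) = 2^2*3 by norm_num, Real.sqrt_mul (by positivity), Real.sqrt_sq (by norm_num)]

lemma aux_tendsto (c : ℝ) :
    Tendsto (fun r : ℝ => π * (r + c)^2 / (2 * Real.sqrt 3 * r^2)) atTop
      (nhds (π / (2 * Real.sqrt 3))) := by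
  have h3 : (0:ℝ) < Real.sqrt 3 := Real.sqrt_pos.mpr (by norm_num)
  have h1 : Tendsto (fun r : ℝ => 1 + c / r) atTop (nhds 1) := by
    have : Tendsto (fun _ : ℝ => (1:ℝ)) atTop (nhds 1) := tendsto_const_nhds
    simpa using this.add (tendsto_const_nhds.div_atTop tendsto_id)
  have h2 : Tendsto (fun r : ℝ => π / (2 * Real.sqrt 3) * (1 + c / r)^2) atTop
      (nhds (π / (2 * Real.sqrt 3))) := by
    have := (h1.pow 2).const_mul (π / (2 * Real.sqrt 3))
    simpa using this
  apply h2.congr'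
  filter_upwards [eventually_gt_atTop 0] with r hr
  have hr0 : r ≠ 0 := ne_of_gt hr
  field_simp

lemma g_tendsto :
    Tendsto (fun r : ℝ => (N r : ℝ) / r^2) atTop (nhds (π / (2 * Real.sqrt 3))) := by
  have h3 : (0:ℝ) < Real.sqrt 3 := Real.sqrt_pos.mpr (by norm_num)
  apply tendsto_of_tendsto_of_tendsto_of_le_of_le' (aux_tendsto (-4)) (aux_tendsto 4)
  · filter_upwards [eventually_ge_atTop (4:ℝ)] with r hr
    have hr0 : (0:ℝ) < r := by linarith
    have h := lower_bound (r := r - 4) (by linarith)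
    rw [sub_add_cancel] at h
    rw [div_le_div_iff₀ (by positivity) (by positivity)]
    calc π * (r + -4)^2 * r^2 = (π * (r-4)^2) * r^2 := by ring
      _ ≤ ((N r : ℝ) * (2 * Real.sqrt 3)) * r^2 := by nlinarith [sq_nonneg r]
      _ = (N r : ℝ) * (2 * Real.sqrt 3 * r^2) := by ring
  · filter_upwards [eventually_ge_atTop (4:ℝ)] with r hr
    have hr0 : (0:ℝ) < r := by linarith
    have h := upper_bound (r := r) (by linarith)
    rw [div_le_div_iff₀ (by positivity) (by positivity)]
    nlinarith [sq_nonneg r]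

end

end HexProof

theorem hex_density :
    Tendsto
      (fun r : ℝ =>
        volume (⋃ v ∈ HexLattice ∩ closedBall 0 r, ball v 1) /
          volume (closedBall (0 : EuclideanSpace ℝ (Fin 2)) r))
      atTop (nhds (ENNReal.ofReal (π / Real.sqrt 12))) := by
  have key : Tendsto (fun r : ℝ => ENNReal.ofReal ((HexProof.N r : ℝ) / r^2)) atTop
      (nhds (ENNReal.ofReal (π / Real.sqrt 12))) := by
    rw [HexProof.sqrt12]
    exact ENNReal.tendsto_ofReal HexProof.g_tendsto
  apply key.congr'
  filter_upwards [eventually_ge_atTop (4:ℝ)] with r hr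
  have hr0 : (0:ℝ) < r := by linarith
  have e1 : (⋃ v ∈ HexLattice ∩ closedBall 0 r, ball v 1) = ⋃ v ∈ HexProof.S r, ball v 1 := rfl
  rw [e1, HexProof.vol_balls, HexProof.vol_cb r hr0.le]
  rw [← ENNReal.ofReal_natCast, ← ENNReal.ofReal_mul (by positivity),
    ← ENNReal.ofReal_div_of_pos (by positivity)]
  congr 1
  rw [mul_comm π (r^2), mul_div_mul_right _ _ (ne_of_gt Real.pi_pos)]
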